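/- Let X be a Hausdorff space which is a continuous image of some compact linearly ordered topological space. Then there exist a compact linearly ordered topological space K and a continuous surjection f : K → X which is reduced, i.e. both irreducible and order-light. -/

import Mathlib

universe u

open Set Topology

/-- The character of a space `X` at a point `x`: the least cardinality of a
neighborhood base of `X` at `x`. -/
noncomputable def nhdsChar (X : Type u) [TopologicalSpace X] (x : X) : Cardinal.{u} :=
  sInf { c | ∃ B : Set (Set X), Cardinal.mk B = c ∧ (∀ U ∈ B, U ∈ nhds x) ∧
      ∀ V ∈ nhds x, ∃ U ∈ B, U ⊆ V }

/-- The character of a space: `χ(X) = sup_{x ∈ X} χ(x, X)`. -/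
noncomputable def spaceChar (X : Type u) [TopologicalSpace X] : Cardinal.{u} :=
  ⨆ x : X, nhdsChar X x

/-- The cellularity of a space: the supremum of cardinalities of pairwise disjoint
families of nonempty open subsets. -/
noncomputable def cellularity (X : Type u) [TopologicalSpace X] : Cardinal.{u} :=
  sSup { c | ∃ 𝒰 : Set (Set X), Cardinal.mk 𝒰 = c ∧ (∀ U ∈ 𝒰, IsOpen U ∧ U.Nonempty) ∧
      𝒰.PairwiseDisjoint id }

/-- The density of a space: the least cardinality of a dense subset. -/
noncomputable def density (X : Type u) [TopologicalSpace X] : Cardinal.{u} :=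
  sInf { c | ∃ D : Set X, Cardinal.mk D = c ∧ Dense D }

/-- The weight of a space: the least cardinality of a base for the topology. -/
noncomputable def weight (X : Type u) [TopologicalSpace X] : Cardinal.{u} :=
  sInf { c | ∃ B : Set (Set X), Cardinal.mk B = c ∧ TopologicalSpace.IsTopologicalBasis B }

/-- A surjective map is irreducible if no proper closed subset maps onto the codomain. -/
def IsIrreducibleMap {K : Type*} {X : Type*} [TopologicalSpace K] [TopologicalSpace X]
    (f : K → X) : Prop :=
  Function.Surjective f ∧ ∀ A : Set K, IsClosed A → A ≠ univ → f '' A ≠ univ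

/-- `C` is an order component of `A`: a maximal convex subset of `A`. -/
def IsOrderComponent {K : Type*} [LinearOrder K] (A C : Set K) : Prop :=
  C ⊆ A ∧ C.OrdConnected ∧ ∀ C' : Set K, C ⊆ C' → C' ⊆ A → C'.OrdConnected → C' = C

/-- A map from a linearly ordered set is order-light if every order component of every
fiber is a singleton. -/
def OrderLight {K : Type*} {X : Type*} [LinearOrder K] (f : K → X) : Prop :=
  ∀ x : X, ∀ C : Set K, IsOrderComponent (f ⁻¹' {x}) C → ∃ k, C = {k}

/-- The countable chain condition: every pairwise disjoint family of nonempty open sets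
is countable. -/
def CCC (X : Type*) [TopologicalSpace X] : Prop :=
  ∀ 𝒰 : Set (Set X), (∀ U ∈ 𝒰, IsOpen U ∧ U.Nonempty) → 𝒰.PairwiseDisjoint id → 𝒰.Countable

/-- A space is non-archimedean if it has a base any two members of which are either
disjoint or comparable by inclusion. -/
def NonArchimedean (X : Type*) [TopologicalSpace X] : Prop :=
  ∃ B : Set (Set X), TopologicalSpace.IsTopologicalBasis B ∧
    ∀ U ∈ B, ∀ V ∈ B, Disjoint U V ∨ U ⊆ V ∨ V ⊆ U

/-- A space is perfectly normal if it is normal and every closed set is a Gδ-set. -/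
def PerfNormal (X : Type*) [TopologicalSpace X] : Prop :=
  NormalSpace X ∧ ∀ A : Set X, IsClosed A → IsGδ A

/-- `X` is a continuous image of some compact linearly ordered topological space
(a linearly ordered set equipped with its order topology). -/
def ContinuousImageOfCompactLOTS (X : Type u) [TopologicalSpace X] : Prop :=
  ∃ (K : Type u) (lo : LinearOrder K) (tK : TopologicalSpace K),
    letI := lo; letI := tK;
    OrderTopology K ∧ CompactSpace K ∧ ∃ f : K → X, Continuous f ∧ Function.Surjective f

/-- A closed set `A` is a strong T-set: the boundary of each connected component of the
complement consists of exactly two points, and each such component is homeomorphic to the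
open unit interval `(0,1)`. -/
def IsStrongTSet {Y : Type*} [TopologicalSpace Y] (A : Set Y) : Prop :=
  IsClosed A ∧ ∀ x ∈ Aᶜ,
    (∃ a b : Y, a ≠ b ∧ frontier (connectedComponentIn Aᶜ x) = {a, b}) ∧
    Nonempty (↥(connectedComponentIn Aᶜ x) ≃ₜ ↥(Ioo (0:ℝ) 1))

/-- Souslin's Hypothesis: every ccc LOTS is separable. -/
def SouslinHypothesis : Prop :=
  ∀ (L : Type u) (lo : LinearOrder L) (tL : TopologicalSpace L),
    letI := lo; letI := tL;
    OrderTopology L → CCC L → TopologicalSpace.SeparableSpace L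

section AuxReduced

/-- Two comparable topologies, the finer compact and the coarser Hausdorff, coincide. -/
lemma topology_eq_of_le_compact_t2 {α : Type*} {t₁ t₂ : TopologicalSpace α}
    (hle : t₁ ≤ t₂) (hc : @CompactSpace α t₁) (h2 : @T2Space α t₂) : t₁ = t₂ := by
  have hclosed : ∀ s : Set α, @IsClosed α t₁ s → @IsClosed α t₂ s := by
    intro s hs
    have hcs : @IsCompact α t₁ s := @IsClosed.isCompact α t₁ s hc hs
    have hcs2 : @IsCompact α t₂ s := by
      have him : s = id '' s := (Set.image_id s).symm
      rw [him]
      exact @IsCompact.image α α t₁ t₂ s id hcs (continuous_id_iff_le.mpr hle)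
    exact @IsCompact.isClosed α t₂ h2 s hcs2
  refine le_antisymm hle ?_
  intro s hs
  have h1 : @IsClosed α t₁ sᶜ := (@isClosed_compl_iff α t₁ s).mpr hs
  exact (@isClosed_compl_iff α t₂ s).mp (hclosed _ h1)

/-- A closed subset of a compact LOTS is a LOTS in the induced order. -/
lemma orderTopology_closed_subtype {L : Type u} [LinearOrder L] [TopologicalSpace L]
    [OrderTopology L] [CompactSpace L] {A : Set L} (hA : IsClosed A) :
    OrderTopology ↥A := by
  haveI hcomp : CompactSpace ↥A := isCompact_iff_compactSpace.mp hA.isCompact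
  constructor
  refine topology_eq_of_le_compact_t2 ?_ hcomp ?_
  · refine le_generateFrom ?_
    rintro s ⟨a, (rfl | rfl)⟩
    · have h : (Ioi a : Set ↥A) = Subtype.val ⁻¹' (Ioi (a : L)) := by
        ext x; simp [Set.mem_Ioi, Subtype.coe_lt_coe]
      rw [h]; exact isOpen_Ioi.preimage continuous_subtype_val
    · have h : (Iio a : Set ↥A) = Subtype.val ⁻¹' (Iio (a : L)) := by
        ext x; simp [Set.mem_Iio, Subtype.coe_lt_coe]
      rw [h]; exact isOpen_Iio.preimage continuous_subtype_val
  · letI t₂ : TopologicalSpace ↥A :=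
      TopologicalSpace.generateFrom { s | ∃ a, s = Ioi a ∨ s = Iio a }
    haveI h2 : @OrderTopology ↥A t₂ _ := @OrderTopology.mk ↥A t₂ _ rfl
    exact inferInstance

section Collapse

variable {L : Type u} [LinearOrder L] {X : Type u}

/-- The relation collapsing order components of the fibers of `g`. -/
def gRel (g : L → X) (a b : L) : Prop := Set.uIcc a b ⊆ g ⁻¹' {g a}

lemma gRel.refl' (g : L → X) (a : L) : gRel g a a := by
  intro c hc
  rw [Set.uIcc_self, Set.mem_singleton_iff] at hc
  simp [hc]

lemma gRel.symm' {g : L → X} {a b : L} (h : gRel g a b) : gRel g b a := by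
  have hba : g b = g a := h Set.right_mem_uIcc
  intro c hc
  rw [Set.uIcc_comm] at hc
  have h2 := h hc
  simp only [Set.mem_preimage, Set.mem_singleton_iff] at h2 ⊢
  rw [h2, hba]

lemma gRel.trans' {g : L → X} {a b c : L} (hab : gRel g a b) (hbc : gRel g b c) :
    gRel g a c := by
  have hba : g b = g a := hab Set.right_mem_uIcc
  intro d hd
  rcases Set.uIcc_subset_uIcc_union_uIcc (b := b) hd with h | h
  · exact hab h
  · have h2 := hbc h
    simp only [Set.mem_preimage, Set.mem_singleton_iff] at h2 ⊢
    rw [h2, hba]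

lemma gRel_of_mem_uIcc {g : L → X} {a b c d : L} (h : gRel g a b)
    (hc : c ∈ Set.uIcc a b) (hd : d ∈ Set.uIcc a b) : gRel g c d := by
  intro e he
  have hmem : e ∈ Set.uIcc a b := Set.uIcc_subset_uIcc hc hd he
  have h1 := h hmem
  have h2 := h hc
  simp only [Set.mem_preimage, Set.mem_singleton_iff] at h1 h2 ⊢
  rw [h1, h2]

/-- The setoid whose classes are the order components of the fibers of `g`. -/
def gSetoid (g : L → X) : Setoid L :=
  ⟨gRel g, ⟨gRel.refl' g, gRel.symm', gRel.trans'⟩⟩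

/-- The quotient collapsing order components of fibers of `g`. -/
def QSp (g : L → X) : Type _ := Quotient (gSetoid g)

/-- The quotient map. -/
def qmk (g : L → X) : L → QSp g := Quotient.mk (gSetoid g)

lemma qmk_surjective (g : L → X) : Function.Surjective (qmk g) :=
  fun x => Quotient.exists_rep x

lemma qmk_eq_iff {g : L → X} {a b : L} : qmk g a = qmk g b ↔ gRel g a b :=
  ⟨Quotient.exact, fun h => Quot.sound h⟩

/-- The linear order on the quotient. -/
def QLE (g : L → X) (x y : QSp g) : Prop :=
  ∃ a b : L, qmk g a = x ∧ qmk g b = y ∧ a ≤ b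

lemma qle_iff {g : L → X} {a b : L} :
    QLE g (qmk g a) (qmk g b) ↔ (a ≤ b ∨ gRel g a b) := by
  constructor
  · rintro ⟨a', b', ha, hb, hle⟩
    have haa : gRel g a' a := qmk_eq_iff.mp ha
    have hbb : gRel g b' b := qmk_eq_iff.mp hb
    by_cases hab : a ≤ b
    · exact Or.inl hab
    push_neg at hab
    right
    by_cases h1 : a' ≤ b
    · have hbmem : b ∈ Set.uIcc a a' := by
        rw [Set.mem_uIcc]; right; exact ⟨h1, le_of_lt hab⟩
      exact gRel_of_mem_uIcc haa.symm' Set.left_mem_uIcc hbmem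
    · push_neg at h1
      have ha'mem : a' ∈ Set.uIcc b b' := by
        rw [Set.mem_uIcc]; left; exact ⟨le_of_lt h1, hle⟩
      have hba' : gRel g b a' := gRel_of_mem_uIcc hbb.symm' Set.left_mem_uIcc ha'mem
      exact haa.symm'.trans' hba'.symm'
  · rintro (h | h)
    · exact ⟨a, b, rfl, rfl, h⟩
    · exact ⟨a, a, rfl, qmk_eq_iff.mpr h, le_refl a⟩

/-- The quotient of a linear order by the fiber-component relation is a linear order. -/
noncomputable def QLO (g : L → X) : LinearOrder (QSp g) where
  le := QLE g
  le_refl x := by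
    obtain ⟨a, rfl⟩ := qmk_surjective g x
    exact ⟨a, a, rfl, rfl, le_refl a⟩
  le_trans x y z hxy hyz := by
    obtain ⟨a, rfl⟩ := qmk_surjective g x
    obtain ⟨b, rfl⟩ := qmk_surjective g y
    obtain ⟨c, rfl⟩ := qmk_surjective g z
    rcases qle_iff.mp hxy with h1 | h1 <;> rcases qle_iff.mp hyz with h2 | h2
    · exact qle_iff.mpr (Or.inl (le_trans h1 h2))
    · by_cases hac : a ≤ c
      · exact qle_iff.mpr (Or.inl hac)
      · push_neg at hac
        have hmem : a ∈ Set.uIcc b c := by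
          rw [Set.mem_uIcc]; right; exact ⟨hac.le, h1⟩
        exact qle_iff.mpr (Or.inr (gRel_of_mem_uIcc h2 hmem Set.right_mem_uIcc))
    · by_cases hac : a ≤ c
      · exact qle_iff.mpr (Or.inl hac)
      · push_neg at hac
        have hmem : c ∈ Set.uIcc a b := by
          rw [Set.mem_uIcc]; right; exact ⟨h2, hac.le⟩
        exact qle_iff.mpr (Or.inr (gRel_of_mem_uIcc h1 Set.left_mem_uIcc hmem))
    · exact qle_iff.mpr (Or.inr (h1.trans' h2))
  le_antisymm x y h1 h2 := by
    obtain ⟨a, rfl⟩ := qmk_surjective g x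
    obtain ⟨b, rfl⟩ := qmk_surjective g y
    rcases qle_iff.mp h1 with ha | ha
    · rcases qle_iff.mp h2 with hb | hb
      · rw [le_antisymm ha hb]
      · exact (qmk_eq_iff.mpr hb).symm
    · exact qmk_eq_iff.mpr ha
  le_total x y := by
    obtain ⟨a, rfl⟩ := qmk_surjective g x
    obtain ⟨b, rfl⟩ := qmk_surjective g y
    rcases le_total a b with h | h
    · exact Or.inl (qle_iff.mpr (Or.inl h))
    · exact Or.inr (qle_iff.mpr (Or.inl h))
  toDecidableLE := fun _ _ => Classical.dec _

lemma qlt_iff' {g : L → X} {a b : L} :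
    (QLE g (qmk g a) (qmk g b) ∧ ¬ QLE g (qmk g b) (qmk g a)) ↔
      (a < b ∧ ¬ gRel g a b) := by
  constructor
  · rintro ⟨h1, h2⟩
    have hnr : ¬ gRel g a b := fun h => h2 (qle_iff.mpr (Or.inr h.symm'))
    rcases qle_iff.mp h1 with hle | hle
    · refine ⟨lt_of_le_of_ne hle ?_, hnr⟩
      rintro rfl
      exact h2 (qle_iff.mpr (Or.inl (le_refl a)))
    · exact absurd hle hnr
  · rintro ⟨hlt, hnr⟩
    refine ⟨qle_iff.mpr (Or.inl hlt.le), ?_⟩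
    intro h
    rcases qle_iff.mp h with hle | hle
    · exact absurd hlt (not_lt.mpr hle)
    · exact hnr hle.symm'

end Collapse

end AuxReduced

section CollapseTop

variable {L : Type u} [LinearOrder L] [TopologicalSpace L] [OrderTopology L]
  [CompactSpace L] {X : Type u} [TopologicalSpace X] [T2Space X]

lemma isClosed_gClass {g : L → X} (hg : Continuous g) (a : L) :
    IsClosed {b | gRel g a b} := by
  rw [← isOpen_compl_iff, isOpen_iff_mem_nhds]
  intro b hb
  simp only [Set.mem_compl_iff, Set.mem_setOf_eq] at hb
  obtain ⟨c, hc, hgc⟩ := Set.not_subset.mp hb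
  simp only [Set.mem_preimage, Set.mem_singleton_iff] at hgc
  by_cases hcb : c = b
  · subst hcb
    have hopen : IsOpen (g ⁻¹' ({g a}ᶜ)) :=
      (isClosed_singleton (x := g a)).isOpen_compl.preimage hg
    refine Filter.mem_of_superset (hopen.mem_nhds ?_) ?_
    · simpa using hgc
    · intro b' hb'
      simp only [Set.mem_preimage, Set.mem_compl_iff, Set.mem_singleton_iff] at hb'
      simp only [Set.mem_compl_iff, Set.mem_setOf_eq]
      intro hrel
      exact hb' (hrel Set.right_mem_uIcc)
  · rcases lt_or_gt_of_ne hcb with hlt | hgt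
    · have hac : a ≤ c := by
        rcases Set.mem_uIcc.mp hc with ⟨h1, _⟩ | ⟨h1, h2⟩
        · exact h1
        · exact absurd hlt (not_lt.mpr h1)
      refine Filter.mem_of_superset (Ioi_mem_nhds hlt) ?_
      intro b' hb'
      simp only [Set.mem_compl_iff, Set.mem_setOf_eq]
      intro hrel
      exact hgc (hrel (Set.mem_uIcc.mpr (Or.inl ⟨hac, le_of_lt hb'⟩)))
    · have hca : c ≤ a := by
        rcases Set.mem_uIcc.mp hc with ⟨h1, h2⟩ | ⟨h1, h2⟩
        · exact absurd h2 (not_le.mpr hgt)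
        · exact h2
      refine Filter.mem_of_superset (Iio_mem_nhds hgt) ?_
      intro b' hb'
      simp only [Set.mem_compl_iff, Set.mem_setOf_eq]
      intro hrel
      exact hgc (hrel (Set.mem_uIcc.mpr (Or.inr ⟨le_of_lt hb', hca⟩)))

lemma gClass_exists_least {g : L → X} (hg : Continuous g) (b : L) :
    ∃ m, IsLeast {c | gRel g b c} m :=
  (isClosed_gClass hg b).isCompact.exists_isLeast ⟨b, gRel.refl' g b⟩

lemma gClass_exists_greatest {g : L → X} (hg : Continuous g) (b : L) :
    ∃ M, IsGreatest {c | gRel g b c} M :=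
  (isClosed_gClass hg b).isCompact.exists_isGreatest ⟨b, gRel.refl' g b⟩

/-- Collapsing the order components of the fibers of an irreducible map on a
compact LOTS yields a reduced map on a compact LOTS. -/
lemma collapse_main (g : L → X) (hg : Continuous g) (hirr : IsIrreducibleMap g) :
    ∃ (K : Type u) (lo : LinearOrder K) (tK : TopologicalSpace K),
      letI := lo; letI := tK;
      OrderTopology K ∧ CompactSpace K ∧
        ∃ f : K → X, Continuous f ∧ Function.Surjective f ∧
          IsIrreducibleMap f ∧ OrderLight f := by
  classical
  letI lo := QLO g
  letI tQ : TopologicalSpace (QSp g) :=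
    TopologicalSpace.coinduced (qmk g) ‹TopologicalSpace L›
  have hqcont : Continuous (qmk g) := continuous_coinduced_rng
  have hqsurj : Function.Surjective (qmk g) := qmk_surjective g
  haveI hQcomp : CompactSpace (QSp g) := by
    constructor
    have huniv : (Set.univ : Set (QSp g)) = qmk g '' Set.univ := by
      rw [Set.image_univ, Set.range_eq_univ.mpr hqsurj]
    rw [huniv]
    exact isCompact_univ.image hqcont
  -- the order on QSp g is QLE definitionally
  have hle : ∀ a b : L, (qmk g a ≤ qmk g b) = QLE g (qmk g a) (qmk g b) := fun _ _ => rfl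
  have hqlt : ∀ a b : L, (qmk g a < qmk g b ↔ a < b ∧ ¬ gRel g a b) := by
    intro a b
    rw [lt_iff_le_not_ge]
    exact qlt_iff'
  -- preimages of rays
  have hIio : ∀ b : L, ∃ m : L, qmk g ⁻¹' (Iio (qmk g b)) = Iio m := by
    intro b
    obtain ⟨m, hm1, hm2⟩ := gClass_exists_least hg b
    refine ⟨m, ?_⟩
    ext x
    simp only [Set.mem_preimage, Set.mem_Iio]
    rw [hqlt]
    constructor
    · rintro ⟨hxb, hnr⟩
      by_contra hmx
      push_neg at hmx
      have hxmem : x ∈ Set.uIcc b m := Set.mem_uIcc.mpr (Or.inr ⟨hmx, hxb.le⟩)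
      exact hnr (gRel_of_mem_uIcc hm1 hxmem Set.left_mem_uIcc)
    · intro hxm
      have hmb : m ≤ b := hm2 (gRel.refl' g b)
      refine ⟨hxm.trans_le hmb, ?_⟩
      intro hr
      exact absurd (hm2 hr.symm') (not_le.mpr hxm)
  have hIoi : ∀ b : L, ∃ M : L, qmk g ⁻¹' (Ioi (qmk g b)) = Ioi M := by
    intro b
    obtain ⟨M, hM1, hM2⟩ := gClass_exists_greatest hg b
    refine ⟨M, ?_⟩
    ext x
    simp only [Set.mem_preimage, Set.mem_Ioi]
    rw [hqlt]
    constructor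
    · rintro ⟨hbx, hnr⟩
      by_contra hxM
      push_neg at hxM
      have hxmem : x ∈ Set.uIcc b M := Set.mem_uIcc.mpr (Or.inl ⟨hbx.le, hxM⟩)
      exact hnr (gRel_of_mem_uIcc hM1 Set.left_mem_uIcc hxmem)
    · intro hMx
      have hbM : b ≤ M := hM2 (gRel.refl' g b)
      refine ⟨hbM.trans_lt hMx, ?_⟩
      intro hr
      exact absurd (hM2 hr) (not_le.mpr hMx)
  -- quotient topology = order topology
  have htop : tQ = TopologicalSpace.generateFrom
      { s : Set (QSp g) | ∃ a, s = Ioi a ∨ s = Iio a } := by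
    refine topology_eq_of_le_compact_t2 ?_ hQcomp ?_
    · refine le_generateFrom ?_
      rintro s ⟨x, (rfl | rfl)⟩
      · obtain ⟨b, rfl⟩ := hqsurj x
        rw [isOpen_coinduced]
        obtain ⟨M, hM⟩ := hIoi b
        rw [hM]; exact isOpen_Ioi
      · obtain ⟨b, rfl⟩ := hqsurj x
        rw [isOpen_coinduced]
        obtain ⟨m, hm⟩ := hIio b
        rw [hm]; exact isOpen_Iio
    · letI t₂ : TopologicalSpace (QSp g) :=
        TopologicalSpace.generateFrom { s | ∃ a, s = Ioi a ∨ s = Iio a }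
      haveI h2 : @OrderTopology (QSp g) t₂ _ := @OrderTopology.mk (QSp g) t₂ _ rfl
      exact inferInstance
  haveI hQot : OrderTopology (QSp g) := ⟨htop⟩
  -- the factored map
  have hresp : ∀ a b : L, gSetoid g |>.r a b → g a = g b := by
    intro a b h
    exact (h Set.right_mem_uIcc).symm
  refine ⟨QSp g, lo, tQ, hQot, hQcomp, Quotient.lift g hresp, ?_, ?_, ?_, ?_⟩
  · -- continuity
    exact continuous_coinduced_dom.mpr hg
  · -- surjectivity
    intro x
    obtain ⟨a, ha⟩ := hirr.1 x
    exact ⟨qmk g a, ha⟩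
  · -- irreducibility
    set f := Quotient.lift g hresp with hf
    refine ⟨fun x => by obtain ⟨a, ha⟩ := hirr.1 x; exact ⟨qmk g a, ha⟩, ?_⟩
    intro A hA hAne him
    refine hirr.2 (qmk g ⁻¹' A) (hA.preimage hqcont) ?_ ?_
    · intro h
      apply hAne
      have h2 := congrArg (Set.image (qmk g)) h
      rwa [Set.image_preimage_eq A hqsurj, Set.image_univ,
        Set.range_eq_univ.mpr hqsurj] at h2
    · rw [Set.eq_univ_iff_forall] at him ⊢
      intro x
      obtain ⟨y, hy, hyx⟩ := him x
      obtain ⟨a, rfl⟩ := hqsurj y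
      exact ⟨a, hy, hyx⟩
  · -- order-lightness
    set f := Quotient.lift g hresp with hf
    intro x C hC
    obtain ⟨hCsub, hCconv, hCmax⟩ := hC
    have hCne : C.Nonempty := by
      by_contra h
      rw [Set.not_nonempty_iff_eq_empty] at h
      obtain ⟨k, hk⟩ := hirr.1 x
      have hk' : f (qmk g k) = x := hk
      have h1 := hCmax {qmk g k} (by simp [h])
        (by rw [Set.singleton_subset_iff]; exact hk') Set.ordConnected_singleton
      rw [h] at h1
      exact absurd h1 (Set.singleton_ne_empty _)
    obtain ⟨c, hc⟩ := hCne
    refine ⟨c, Set.eq_singleton_iff_unique_mem.mpr ⟨hc, ?_⟩⟩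
    intro d hd
    obtain ⟨u, hu⟩ := hqsurj c
    obtain ⟨v, hv⟩ := hqsurj d
    subst hu; subst hv
    have hfx : ∀ y ∈ C, f y = x := fun y hy => hCsub hy
    have hgu : g u = x := hfx _ hc
    have key : gRel g u v := by
      intro w hw
      have hwC : qmk g w ∈ C := by
        rcases le_total u v with h' | h'
        · rw [Set.uIcc_of_le h'] at hw
          exact hCconv.out hc hd
            ⟨qle_iff.mpr (Or.inl hw.1), qle_iff.mpr (Or.inl hw.2)⟩
        · rw [Set.uIcc_of_ge h'] at hw
          exact hCconv.out hd hc
            ⟨qle_iff.mpr (Or.inl hw.1), qle_iff.mpr (Or.inl hw.2)⟩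
      have : f (qmk g w) = x := hfx _ hwC
      simp only [Set.mem_preimage, Set.mem_singleton_iff]
      rw [show f (qmk g w) = g w from rfl] at this
      rw [this, hgu]
    exact (Quot.sound key).symm

end CollapseTop

theorem reduced_map_exists (X : Type u) [TopologicalSpace X] [T2Space X]
    (hX : ContinuousImageOfCompactLOTS X) :
    ∃ (K : Type u) (lo : LinearOrder K) (tK : TopologicalSpace K),
      letI := lo; letI := tK;
      OrderTopology K ∧ CompactSpace K ∧
        ∃ f : K → X, Continuous f ∧ Function.Surjective f ∧
          IsIrreducibleMap f ∧ OrderLight f := by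
  classical
  obtain ⟨L, lo, tL, hot, hcomp, g, hgc, hgs⟩ := hX
  letI := lo; letI := tL
  haveI := hot; haveI := hcomp
  -- Zorn's lemma: a minimal closed subset mapping onto X
  set S : Set (Set L) := {A | IsClosed A ∧ g '' A = univ} with hSdef
  have hchain : ∀ c ⊆ S, IsChain (· ⊆ ·) c → c.Nonempty →
      ∃ lb ∈ S, ∀ s ∈ c, lb ⊆ s := by
    intro c hcS hch hcne
    refine ⟨⋂₀ c, ⟨isClosed_sInter fun A hA => (hcS hA).1, ?_⟩,
      fun s hs => Set.sInter_subset_of_mem hs⟩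
    rw [Set.eq_univ_iff_forall]
    intro x
    haveI : Nonempty c := hcne.to_subtype
    have hne : (⋂ A : c, ((A : Set L) ∩ g ⁻¹' {x})).Nonempty := by
      apply IsCompact.nonempty_iInter_of_directed_nonempty_isCompact_isClosed
      · intro A B
        rcases hch.total A.2 B.2 with h | h
        · exact ⟨A, Set.Subset.rfl,
            Set.inter_subset_inter_left (g ⁻¹' {x}) h⟩
        · exact ⟨B, Set.inter_subset_inter_left (g ⁻¹' {x}) h, Set.Subset.rfl⟩
      · intro A
        have himg : g '' (A : Set L) = univ := (hcS A.2).2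
        have : x ∈ g '' (A : Set L) := by rw [himg]; trivial
        obtain ⟨a, haA, hax⟩ := this
        exact ⟨a, haA, by simpa using hax⟩
      · intro A
        exact ((hcS A.2).1.inter ((isClosed_singleton).preimage hgc)).isCompact
      · intro A
        exact (hcS A.2).1.inter ((isClosed_singleton).preimage hgc)
    obtain ⟨a, ha⟩ := hne
    rw [Set.mem_iInter] at ha
    refine ⟨a, ?_, ?_⟩
    · rw [Set.mem_sInter]
      intro A hA
      exact (ha ⟨A, hA⟩).1
    · obtain ⟨A0, hA0⟩ := hcne
      have := (ha ⟨A0, hA0⟩).2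
      simpa using this
  have hSuniv : univ ∈ S :=
    ⟨isClosed_univ, by rw [Set.image_univ, Set.range_eq_univ.mpr hgs]⟩
  obtain ⟨A0, _, hA0min⟩ := zorn_superset_nonempty S hchain univ hSuniv
  have hA0S : A0 ∈ S := hA0min.prop
  -- the subtype is a compact LOTS
  haveI hK1comp : CompactSpace ↥A0 := isCompact_iff_compactSpace.mp hA0S.1.isCompact
  haveI hK1ot : OrderTopology ↥A0 := orderTopology_closed_subtype hA0S.1
  set g1 : ↥A0 → X := g ∘ Subtype.val with hg1def
  have hg1c : Continuous g1 := hgc.comp continuous_subtype_val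
  have hg1s : Function.Surjective g1 := by
    intro x
    have hx : x ∈ g '' A0 := by rw [hA0S.2]; trivial
    obtain ⟨a, ha, hax⟩ := hx
    exact ⟨⟨a, ha⟩, hax⟩
  have hg1irr : IsIrreducibleMap g1 := by
    refine ⟨hg1s, ?_⟩
    intro B hB hBne him
    have hBval : IsClosed (Subtype.val '' B : Set L) :=
      hA0S.1.isClosedMap_subtype_val B hB
    have himg : g '' (Subtype.val '' B) = univ := by
      rw [← Set.image_comp]
      exact him
    have hmem : Subtype.val '' B ∈ S := ⟨hBval, himg⟩
    have hsub : Subtype.val '' B ⊆ A0 := by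
      rintro _ ⟨b, _, rfl⟩
      exact b.2
    have hEq : A0 ⊆ Subtype.val '' B := hA0min.2 hmem hsub
    apply hBne
    rw [Set.eq_univ_iff_forall]
    intro a
    obtain ⟨b, hbB, hb⟩ := hEq a.2
    have : b = a := Subtype.ext hb
    rwa [this] at hbB
  exact collapse_main g1 hg1c hg1irr
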